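/- arXiv:2205.09044 — 2 statements merged into one kernel-verified Lean document; each statement's English description precedes it below -/
import Mathlib

section
/- Let A := [[1,0,1],[0,1,0],[0,0,1]] and B := [[1,0,0],[0,1,1],[0,0,1]]. There exists a sequence (A_n)_{n≥1} with each A_n ∈ {A,B} such that both rank-one matrices u·r and w·r are subsequential limits of the sequence n ↦ P_n/‖P_n‖, where u is the column vector (1/2, 1/2, 0), w is the column vector (2/3, 1/3, 0), and r is the row vector (0, 0, 1). In particular, in the approximation P_n/‖P_n‖ − c_n·r_n → 0 the column vectors c_n cannot be taken constant. -/
open Filter Matrix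

/-- `‖X‖`: sum of the absolute values of the entries of a real matrix. -/
noncomputable def matEntrySumNorm {d : ℕ} (M : Matrix (Fin d) (Fin d) ℝ) : ℝ :=
  ∑ i, ∑ j, |M i j|

/-- `P_n = A_1 ⋯ A_n` (ordered product). -/
def matProd {d : ℕ} (A : ℕ → Matrix (Fin d) (Fin d) ℝ) (n : ℕ) :
    Matrix (Fin d) (Fin d) ℝ :=
  ((List.range n).map fun i => A (i + 1)).prod


def cnt (n : ℕ) : ℕ :=
  if n ≤ 6 then n
  else 6 * 2 ^ (Nat.log 2 ((n + 2) / 9)) + ((n + 3) - 12 * 2 ^ (Nat.log 2 ((n + 2) / 9)))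

lemma cnt_formula (k n : ℕ) (h1 : 9 * 2 ^ k < n + 3) (h2 : n + 3 ≤ 18 * 2 ^ k) :
    cnt n = 6 * 2 ^ k + ((n + 3) - 12 * 2 ^ k) := by
  have hk : 1 ≤ 2 ^ k := Nat.one_le_two_pow
  have h7 : ¬ n ≤ 6 := by intro h; omega
  have hlog : Nat.log 2 ((n + 2) / 9) = k := by
    apply Nat.log_eq_of_pow_le_of_lt_pow
    · exact (Nat.le_div_iff_mul_le (by norm_num)).2 (by omega)
    · rw [Nat.div_lt_iff_lt_mul (by norm_num : 0 < 9)]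
      have : 2 ^ (k + 1) * 9 = 18 * 2 ^ k := by ring
      omega
  rw [cnt, if_neg h7, hlog]

lemma exists_block (t : ℕ) (ht : 10 ≤ t) : ∃ k, 9 * 2 ^ k < t ∧ t ≤ 18 * 2 ^ k := by
  set k := Nat.log 2 ((t - 1) / 9) with hk
  have h1 : 2 ^ k ≤ (t - 1) / 9 := Nat.pow_log_le_self 2 (by omega)
  have h2 : (t - 1) / 9 < 2 ^ (k + 1) := Nat.lt_pow_succ_log_self (by norm_num) _
  have h1' : 9 * 2 ^ k ≤ t - 1 := by
    have := (Nat.le_div_iff_mul_le (by norm_num : 0 < 9)).1 h1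
    omega
  have h2' : t - 1 < 2 ^ (k + 1) * 9 := (Nat.div_lt_iff_lt_mul (by norm_num : 0 < 9)).1 h2
  refine ⟨k, by omega, by
    have : 2 ^ (k + 1) * 9 = 18 * 2 ^ k := by ring
    omega⟩

lemma cnt_step (n : ℕ) : cnt (n + 1) = cnt n ∨ cnt (n + 1) = cnt n + 1 := by
  rcases le_or_gt (n + 1) 6 with h | h
  · right; rw [cnt, cnt, if_pos h, if_pos (by omega)]
  · -- n ≥ 6
    obtain ⟨k, hk1, hk2⟩ := exists_block (n + 4) (by omega)
    have hval : cnt (n + 1) = 6 * 2 ^ k + ((n + 4) - 12 * 2 ^ k) :=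
      cnt_formula k (n + 1) (by omega) (by omega)
    rcases Nat.lt_or_ge (9 * 2 ^ k) (n + 3) with hb | hb
    · have hval' : cnt n = 6 * 2 ^ k + ((n + 3) - 12 * 2 ^ k) :=
        cnt_formula k n hb (by omega)
      set m := 12 * 2 ^ k
      omega
    · -- boundary: n + 3 = 9 * 2^k  (since 9*2^k < n+4 means 9*2^k ≤ n+3)
      have heq : n + 3 = 9 * 2 ^ k := by omega
      rcases Nat.eq_zero_or_pos k with hk0 | hk0
      · subst hk0
        have hn : n = 6 := by simpa using heq
        subst hn
        left
        have h7 : cnt 7 = 6 := by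
          have := cnt_formula 0 7 (by norm_num) (by norm_num)
          simpa using this
        have h6 : cnt 6 = 6 := by rw [cnt, if_pos (by norm_num)]
        omega
      · left
        obtain ⟨k', rfl⟩ : ∃ k', k = k' + 1 := ⟨k - 1, by omega⟩
        have h2 : (2:ℕ) ^ (k' + 1) = 2 * 2 ^ k' := by ring
        have hval' : cnt n = 6 * 2 ^ k' + ((n + 3) - 12 * 2 ^ k') :=
          cnt_formula k' n (by omega) (by omega)
        have hk' : 1 ≤ 2 ^ k' := Nat.one_le_two_pow
        set m := 2 ^ k'
        omega

lemma cnt_zero : cnt 0 = 0 := rfl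

lemma cnt_le (n : ℕ) : cnt n ≤ n := by
  induction n with
  | zero => simp [cnt_zero]
  | succ n ih => rcases cnt_step n with h | h <;> omega

def matA : Matrix (Fin 3) (Fin 3) ℝ := !![(1:ℝ), 0, 1; 0, 1, 0; 0, 0, 1]
def matB : Matrix (Fin 3) (Fin 3) ℝ := !![(1:ℝ), 0, 0; 0, 1, 1; 0, 0, 1]

noncomputable def seqM (m : ℕ) : Matrix (Fin 3) (Fin 3) ℝ :=
  if cnt m = cnt (m - 1) + 1 then matA else matB

lemma matProd_succ {d : ℕ} (A : ℕ → Matrix (Fin d) (Fin d) ℝ) (n : ℕ) :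
    matProd A (n + 1) = matProd A n * A (n + 1) := by
  simp [matProd, List.range_succ]

lemma matProd_seqM (n : ℕ) :
    matProd seqM n = !![(1:ℝ), 0, (cnt n : ℝ); 0, 1, (n : ℝ) - (cnt n : ℝ); 0, 0, 1] := by
  induction n with
  | zero =>
      simp only [matProd, List.range_zero, List.map_nil, List.prod_nil, cnt_zero,
        Nat.cast_zero, Matrix.one_fin_three]
      norm_num
  | succ n ih =>
      rw [matProd_succ, ih]
      rcases cnt_step n with h | h
      · have hA : seqM (n + 1) = matB := by
          rw [seqM, if_neg]
          simp only [Nat.add_sub_cancel]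
          omega
        rw [hA, h, matB, Matrix.mul_fin_three]
        congr 1 <;> push_cast <;> ring
      · have hA : seqM (n + 1) = matA := by
          rw [seqM, if_pos]
          simpa using h
        rw [hA, h, matA, Matrix.mul_fin_three]
        congr 1 <;> push_cast <;> ring

lemma norm_matProd_seqM (n : ℕ) : matEntrySumNorm (matProd seqM n) = (n : ℝ) + 3 := by
  have hle : (cnt n : ℝ) ≤ (n : ℝ) := by exact_mod_cast cnt_le n
  have h0 : (0:ℝ) ≤ (cnt n : ℝ) := Nat.cast_nonneg _
  rw [matProd_seqM, matEntrySumNorm]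
  norm_num [Fin.sum_univ_three, Matrix.vecHead, Matrix.vecTail, Matrix.cons_val_two,
    Matrix.cons_val_one, Matrix.cons_val_zero]
  rw [abs_of_nonneg (by linarith : (0:ℝ) ≤ (n:ℝ) - cnt n)]
  ring

lemma two_pow_pos (k : ℕ) : (0:ℝ) < 2 ^ k := by positivity

lemma eps_tendsto (a : ℝ) (ha : 0 < a) :
    Tendsto (fun k : ℕ => (a * 2 ^ k)⁻¹) atTop (nhds 0) := by
  apply Filter.Tendsto.comp tendsto_inv_atTop_zero
  exact Tendsto.const_mul_atTop ha (tendsto_pow_atTop_atTop_of_one_lt one_lt_two)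

lemma tendsto_L_add (L E : Matrix (Fin 3) (Fin 3) ℝ) (a : ℝ) (ha : 0 < a) :
    Tendsto (fun k : ℕ => L + (a * 2 ^ k)⁻¹ • E) atTop (nhds L) := by
  have h2 := (eps_tendsto a ha).smul_const E
  have h3 : Tendsto (fun k : ℕ => L + (a * 2 ^ k)⁻¹ • E) atTop (nhds (L + (0:ℝ) • E)) :=
    Tendsto.add tendsto_const_nhds h2
  simpa using h3

def phiSeq (k : ℕ) : ℕ := 12 * 2 ^ k - 3
def psiSeq (k : ℕ) : ℕ := 18 * 2 ^ k - 3

lemma one_le_pow (k : ℕ) : 1 ≤ 2 ^ k := Nat.one_le_two_pow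

lemma phiSeq_mono : StrictMono phiSeq := by
  apply strictMono_nat_of_lt_succ
  intro k
  have h := one_le_pow k
  have : (2:ℕ) ^ (k + 1) = 2 * 2 ^ k := by ring
  simp only [phiSeq]
  omega

lemma psiSeq_mono : StrictMono psiSeq := by
  apply strictMono_nat_of_lt_succ
  intro k
  have h := one_le_pow k
  have : (2:ℕ) ^ (k + 1) = 2 * 2 ^ k := by ring
  simp only [psiSeq]
  omega

lemma cnt_phi (k : ℕ) : cnt (phiSeq k) = 6 * 2 ^ k := by
  have h := one_le_pow k
  have := cnt_formula k (phiSeq k) (by simp only [phiSeq]; omega) (by simp only [phiSeq]; omega)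
  simp only [phiSeq] at this ⊢
  omega

lemma cnt_psi (k : ℕ) : cnt (psiSeq k) = 12 * 2 ^ k := by
  have h := one_le_pow k
  have := cnt_formula k (psiSeq k) (by simp only [psiSeq]; omega) (by simp only [psiSeq]; omega)
  simp only [psiSeq] at this ⊢
  omega

lemma phi_cast (k : ℕ) : ((phiSeq k : ℕ) : ℝ) = 12 * 2 ^ k - 3 := by
  have h := one_le_pow k
  simp only [phiSeq]
  push_cast [Nat.cast_sub (by omega : 3 ≤ 12 * 2 ^ k)]
  ring

lemma psi_cast (k : ℕ) : ((psiSeq k : ℕ) : ℝ) = 18 * 2 ^ k - 3 := by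
  have h := one_le_pow k
  simp only [psiSeq]
  push_cast [Nat.cast_sub (by omega : 3 ≤ 18 * 2 ^ k)]
  ring

lemma phi_val (k : ℕ) :
    (matEntrySumNorm (matProd seqM (phiSeq k)))⁻¹ • matProd seqM (phiSeq k) =
      !![(0:ℝ), 0, 1/2; 0, 0, 1/2; 0, 0, 0] +
        ((12:ℝ) * 2 ^ k)⁻¹ • !![(1:ℝ), 0, 0; 0, 1, -3; 0, 0, 1] := by
  have hp := two_pow_pos k
  rw [norm_matProd_seqM, matProd_seqM, cnt_phi, phi_cast]
  have hn : ((12:ℝ) * 2 ^ k - 3) + 3 = 12 * 2 ^ k := by ring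
  rw [hn]
  ext i j
  fin_cases i <;> fin_cases j <;>
    simp [Matrix.smul_apply, Matrix.vecHead, Matrix.vecTail] <;> field_simp <;> ring

lemma psi_val (k : ℕ) :
    (matEntrySumNorm (matProd seqM (psiSeq k)))⁻¹ • matProd seqM (psiSeq k) =
      !![(0:ℝ), 0, 2/3; 0, 0, 1/3; 0, 0, 0] +
        ((18:ℝ) * 2 ^ k)⁻¹ • !![(1:ℝ), 0, 0; 0, 1, -3; 0, 0, 1] := by
  have hp := two_pow_pos k
  rw [norm_matProd_seqM, matProd_seqM, cnt_psi, psi_cast]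
  have hn : ((18:ℝ) * 2 ^ k - 3) + 3 = 18 * 2 ^ k := by ring
  rw [hn]
  ext i j
  fin_cases i <;> fin_cases j <;>
    simp [Matrix.smul_apply, Matrix.vecHead, Matrix.vecTail] <;> field_simp <;> ring

lemma L_phi_eq : vecMulVec ![(1:ℝ)/2, 1/2, 0] ![(0:ℝ), 0, 1] =
    !![(0:ℝ), 0, 1/2; 0, 0, 1/2; 0, 0, 0] := by
  ext i j
  fin_cases i <;> fin_cases j <;> simp [vecMulVec, Matrix.vecHead, Matrix.vecTail] <;> norm_num

lemma L_psi_eq : vecMulVec ![(2:ℝ)/3, 1/3, 0] ![(0:ℝ), 0, 1] =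
    !![(0:ℝ), 0, 2/3; 0, 0, 1/3; 0, 0, 0] := by
  ext i j
  fin_cases i <;> fin_cases j <;> simp [vecMulVec, Matrix.vecHead, Matrix.vecTail] <;> norm_num

lemma tendsto_phi :
    Tendsto (fun k => (matEntrySumNorm (matProd seqM (phiSeq k)))⁻¹ • matProd seqM (phiSeq k))
      atTop (nhds (vecMulVec ![(1:ℝ)/2, 1/2, 0] ![(0:ℝ), 0, 1])) := by
  rw [L_phi_eq]
  simp only [phi_val]
  exact tendsto_L_add _ _ 12 (by norm_num)

lemma tendsto_psi :
    Tendsto (fun k => (matEntrySumNorm (matProd seqM (psiSeq k)))⁻¹ • matProd seqM (psiSeq k))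
      atTop (nhds (vecMulVec ![(2:ℝ)/3, 1/3, 0] ![(0:ℝ), 0, 1])) := by
  rw [L_psi_eq]
  simp only [psi_val]
  exact tendsto_L_add _ _ 18 (by norm_num)

lemma neg_part :
    ¬ ∃ c : Fin 3 → ℝ, ∃ r : ℕ → Fin 3 → ℝ,
      Tendsto (fun n => (matEntrySumNorm (matProd seqM n))⁻¹ • matProd seqM n -
        vecMulVec c (r n)) atTop (nhds 0) := by
  rintro ⟨c, r, h⟩
  have hφ := h.comp phiSeq_mono.tendsto_atTop
  have hψ := h.comp psiSeq_mono.tendsto_atTop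
  -- entrywise
  have entry : ∀ (f : ℕ → Matrix (Fin 3) (Fin 3) ℝ), Tendsto f atTop (nhds 0) →
      ∀ i j : Fin 3, Tendsto (fun k => f k i j) atTop (nhds 0) := by
    intro f hf i j
    have h1 := tendsto_pi_nhds.1 hf i
    have h2 := tendsto_pi_nhds.1 h1 j
    simpa using h2
  have h3eps := (eps_tendsto 12 (by norm_num)).const_mul 3
  have h3eps' := (eps_tendsto 18 (by norm_num)).const_mul 3
  -- c 0 * x → 1/2
  have e02 := entry _ hφ 0 2
  have hc0x : Tendsto (fun k => c 0 * r (phiSeq k) 2) atTop (nhds (1/2)) := by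
    have : (fun k => ((fun n => (matEntrySumNorm (matProd seqM n))⁻¹ • matProd seqM n -
        vecMulVec c (r n)) ∘ phiSeq) k 0 2) =
        fun k => 1/2 - c 0 * r (phiSeq k) 2 := by
      funext k
      simp [phi_val k, vecMulVec_apply, Matrix.vecHead, Matrix.vecTail]
    rw [this] at e02
    have := tendsto_const_nhds (f := atTop (α := ℕ)) (x := (1:ℝ)/2) |>.sub e02
    simpa using this
  have e12 := entry _ hφ 1 2
  have hc1x : Tendsto (fun k => c 1 * r (phiSeq k) 2) atTop (nhds (1/2)) := by
    have heq : (fun k => ((fun n => (matEntrySumNorm (matProd seqM n))⁻¹ • matProd seqM n -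
        vecMulVec c (r n)) ∘ phiSeq) k 1 2) =
        fun k => 1/2 - 3 * ((12:ℝ) * 2 ^ k)⁻¹ - c 1 * r (phiSeq k) 2 := by
      funext k
      simp [phi_val k, vecMulVec_apply, Matrix.vecHead, Matrix.vecTail]
      ring
    rw [heq] at e12
    have h1 : Tendsto (fun k : ℕ => 1/2 - 3 * ((12:ℝ) * 2 ^ k)⁻¹) atTop (nhds (1/2)) := by
      have := tendsto_const_nhds (f := atTop (α := ℕ)) (x := (1:ℝ)/2) |>.sub h3eps
      simpa using this
    have := h1.sub e12
    simp only [sub_sub_cancel] at this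
    simpa using this
  have e02' := entry _ hψ 0 2
  have hc0y : Tendsto (fun k => c 0 * r (psiSeq k) 2) atTop (nhds (2/3)) := by
    have : (fun k => ((fun n => (matEntrySumNorm (matProd seqM n))⁻¹ • matProd seqM n -
        vecMulVec c (r n)) ∘ psiSeq) k 0 2) =
        fun k => 2/3 - c 0 * r (psiSeq k) 2 := by
      funext k
      simp [psi_val k, vecMulVec_apply, Matrix.vecHead, Matrix.vecTail]
    rw [this] at e02'
    have := tendsto_const_nhds (f := atTop (α := ℕ)) (x := (2:ℝ)/3) |>.sub e02'
    simpa using this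
  have e12' := entry _ hψ 1 2
  have hc1y : Tendsto (fun k => c 1 * r (psiSeq k) 2) atTop (nhds (1/3)) := by
    have heq : (fun k => ((fun n => (matEntrySumNorm (matProd seqM n))⁻¹ • matProd seqM n -
        vecMulVec c (r n)) ∘ psiSeq) k 1 2) =
        fun k => 1/3 - 3 * ((18:ℝ) * 2 ^ k)⁻¹ - c 1 * r (psiSeq k) 2 := by
      funext k
      simp [psi_val k, vecMulVec_apply, Matrix.vecHead, Matrix.vecTail]
      ring
    rw [heq] at e12'
    have h1 : Tendsto (fun k : ℕ => 1/3 - 3 * ((18:ℝ) * 2 ^ k)⁻¹) atTop (nhds (1/3)) := by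
      have := tendsto_const_nhds (f := atTop (α := ℕ)) (x := (1:ℝ)/3) |>.sub h3eps'
      simpa using this
    have := h1.sub e12'
    simp only [sub_sub_cancel] at this
    simpa using this
  have P := hc0x.mul hc1y
  have Q := hc1x.mul hc0y
  have hfun : (fun k => (c 0 * r (phiSeq k) 2) * (c 1 * r (psiSeq k) 2)) =
      (fun k => (c 1 * r (phiSeq k) 2) * (c 0 * r (psiSeq k) 2)) := by
    funext k; ring
  rw [hfun] at P
  have := tendsto_nhds_unique P Q
  norm_num at this

/-- Counterexample 1.3: with `A = [[1,0,1],[0,1,0],[0,0,1]]` and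
`B = [[1,0,0],[0,1,1],[0,0,1]]`, some sequence with terms in `{A, B}` has both
`u ⬝ r` and `w ⬝ r` (with `u = (1/2,1/2,0)`, `w = (2/3,1/3,0)`, `r = (0,0,1)`)
as subsequential limits of `P_n/‖P_n‖`; in particular the column vectors in a
rank-one approximation cannot be taken constant. -/
theorem exists_product_sequence_two_rank_one_limit_points :
    ∃ A : ℕ → Matrix (Fin 3) (Fin 3) ℝ,
      (∀ n, A n = !![(1:ℝ), 0, 1; 0, 1, 0; 0, 0, 1] ∨
            A n = !![(1:ℝ), 0, 0; 0, 1, 1; 0, 0, 1]) ∧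
      (∃ φ : ℕ → ℕ, StrictMono φ ∧
        Tendsto (fun k => (matEntrySumNorm (matProd A (φ k)))⁻¹ • matProd A (φ k))
          atTop (nhds (vecMulVec ![(1:ℝ)/2, 1/2, 0] ![(0:ℝ), 0, 1]))) ∧
      (∃ ψ : ℕ → ℕ, StrictMono ψ ∧
        Tendsto (fun k => (matEntrySumNorm (matProd A (ψ k)))⁻¹ • matProd A (ψ k))
          atTop (nhds (vecMulVec ![(2:ℝ)/3, 1/3, 0] ![(0:ℝ), 0, 1]))) ∧
      ¬ ∃ c : Fin 3 → ℝ, ∃ r : ℕ → Fin 3 → ℝ,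
        Tendsto (fun n => (matEntrySumNorm (matProd A n))⁻¹ • matProd A n -
          vecMulVec c (r n)) atTop (nhds 0) := by
  refine ⟨seqM, ?_, ⟨phiSeq, phiSeq_mono, tendsto_phi⟩, ⟨psiSeq, psiSeq_mono, tendsto_psi⟩,
    neg_part⟩
  intro n
  rw [seqM]
  split_ifs
  · exact Or.inl rfl
  · exact Or.inr rfl
end

section
/- Let b ≥ 2, let Ω_b := {0,…,b−1}^ℕ with the product topology of the discrete topology, and let σ be the shift map on Ω_b. Let M_0, …, M_{b−1} be nonnegative d×d real matrices, r_0, …, r_{b−1} nonnegative row vectors in ℝ^d, and c ∈ ℝ^d a column vector with all entries positive, such that M_{ω_1}⋯M_{ω_n} c ≠ 0 for every ω ∈ Ω_b and n ≥ 0; set c_{ω,n} := M_{ω_1}⋯M_{ω_n} c/‖M_{ω_1}⋯M_{ω_n} c‖. Assume: (1) there is a function ω ↦ c_ω such that c_{ω,n} → c_ω uniformly on Ω_b; (2) for each i ∈ {0,…,b−1}, r_i·c_{ω,n} > 0 for all ω and n, and (r_i·c_{ω,n})^{1/n} → 1 uniformly on Ω_b; (3) for every ω ∈ Ω_b and every i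 ∈ {0,…,b−1}, M_i c_ω ≠ 0. Then there exists a continuous function Φ : Ω_b → ℝ such that lim_{n→∞} ( r_{ω_1} M_{ω_2}⋯M_{ω_n} c / exp(Σ_{k=0}^{n−1} Φ(σ^k ω)) )^{1/n} = 1 uniformly on Ω_b. -/
open Filter Matrix

section

variable {b d : ℕ}

/-- `‖v‖`: sum of the absolute values of the entries of a real vector. -/
noncomputable def vecEntrySumNorm (v : Fin d → ℝ) : ℝ :=
  ∑ i, |v i|

/-- `M_{ω_1} ⋯ M_{ω_n}` (with `ω 0 = ω_1`). -/
def wordProd (M : Fin b → Matrix (Fin d) (Fin d) ℝ) (ω : ℕ → Fin b) (n : ℕ) :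
    Matrix (Fin d) (Fin d) ℝ :=
  ((List.range n).map fun t => M (ω t)).prod

/-- The shift on `Ω_b = {0,…,b−1}^ℕ`. -/
def shiftSeq (ω : ℕ → Fin b) : ℕ → Fin b := fun t => ω (t + 1)

lemma vsn_nonneg (v : Fin d → ℝ) : 0 ≤ vecEntrySumNorm v :=
  Finset.sum_nonneg fun i _ => abs_nonneg _

lemma vsn_pos {v : Fin d → ℝ} (h : v ≠ 0) : 0 < vecEntrySumNorm v := by
  rcases (vsn_nonneg v).lt_or_eq with h' | h'
  · exact h'
  · exfalso; apply h
    have := (Finset.sum_eq_zero_iff_of_nonneg (fun i _ => abs_nonneg (v i))).1 h'.symm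
    funext i
    simpa using abs_eq_zero.1 (this i (Finset.mem_univ i))

lemma vsn_smul (a : ℝ) (v : Fin d → ℝ) :
    vecEntrySumNorm (a • v) = |a| * vecEntrySumNorm v := by
  simp [vecEntrySumNorm, abs_mul, Finset.mul_sum]

lemma abs_le_vsn (v : Fin d → ℝ) (i : Fin d) : |v i| ≤ vecEntrySumNorm v :=
  Finset.single_le_sum (fun j _ => abs_nonneg (v j)) (Finset.mem_univ i)

lemma vsn_sub_abs (x y : Fin d → ℝ) :
    |vecEntrySumNorm x - vecEntrySumNorm y| ≤ vecEntrySumNorm (x - y) := by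
  have : vecEntrySumNorm x - vecEntrySumNorm y = ∑ i, (|x i| - |y i|) := by
    simp [vecEntrySumNorm, Finset.sum_sub_distrib]
  rw [this]
  refine (Finset.abs_sum_le_sum_abs _ _).trans ?_
  refine Finset.sum_le_sum fun i _ => ?_
  simpa using abs_abs_sub_abs_le_abs_sub (x i) (y i)

lemma vsn_mulVec_le (A : Matrix (Fin d) (Fin d) ℝ) (x : Fin d → ℝ) :
    vecEntrySumNorm (A *ᵥ x) ≤ (∑ a, ∑ a', |A a a'|) * vecEntrySumNorm x := by
  unfold vecEntrySumNorm
  rw [Finset.sum_mul]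
  refine Finset.sum_le_sum fun a _ => ?_
  calc |(A *ᵥ x) a| ≤ ∑ a', |A a a' * x a'| := by
        simpa [Matrix.mulVec, dotProduct] using
          Finset.abs_sum_le_sum_abs (fun a' => A a a' * x a') Finset.univ
    _ ≤ ∑ a', |A a a'| * (∑ i, |x i|) := by
        refine Finset.sum_le_sum fun a' _ => ?_
        rw [abs_mul]
        exact mul_le_mul_of_nonneg_left (abs_le_vsn x a') (abs_nonneg _)
    _ = (∑ a', |A a a'|) * ∑ i, |x i| := by rw [Finset.sum_mul]

lemma vsn_continuous : Continuous (vecEntrySumNorm : (Fin d → ℝ) → ℝ) := by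
  unfold vecEntrySumNorm
  exact continuous_finset_sum _ fun i _ => (continuous_apply i).abs

lemma wordProd_zero (M : Fin b → Matrix (Fin d) (Fin d) ℝ) (ω : ℕ → Fin b) :
    wordProd M ω 0 = 1 := rfl

lemma wordProd_succ_left (M : Fin b → Matrix (Fin d) (Fin d) ℝ) (ω : ℕ → Fin b) (n : ℕ) :
    wordProd M ω (n + 1) = M (ω 0) * wordProd M (shiftSeq ω) n := by
  unfold wordProd
  rw [List.range_succ_eq_map]
  simp only [List.map_cons, List.map_map, List.prod_cons]
  rfl

lemma wordProd_succ_right (M : Fin b → Matrix (Fin d) (Fin d) ℝ) (ω : ℕ → Fin b) (n : ℕ) :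
    wordProd M ω (n + 1) = wordProd M ω n * M (ω n) := by
  unfold wordProd
  rw [List.range_succ]
  simp

lemma wordProd_continuous (M : Fin b → Matrix (Fin d) (Fin d) ℝ) (n : ℕ) :
    Continuous fun ω : ℕ → Fin b => wordProd M ω n := by
  induction n with
  | zero => simpa [wordProd_zero] using continuous_const
  | succ n ih =>
      have h2 : Continuous fun ω : ℕ → Fin b => M (ω n) :=
        (continuous_of_discreteTopology (α := Fin b) (f := M)).comp (continuous_apply n)
      simpa only [wordProd_succ_right] using ih.matrix_mul h2

lemma wordProd_nonneg (M : Fin b → Matrix (Fin d) (Fin d) ℝ)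
    (hM : ∀ (i : Fin b) (a a' : Fin d), 0 ≤ M i a a') (ω : ℕ → Fin b) (n : ℕ) :
    ∀ a a', 0 ≤ wordProd M ω n a a' := by
  induction n generalizing ω with
  | zero => intro a a'; rw [wordProd_zero]; by_cases h : a = a' <;> simp [Matrix.one_apply, h]
  | succ n ih =>
      intro a a'
      rw [wordProd_succ_left, Matrix.mul_apply]
      exact Finset.sum_nonneg fun j _ => mul_nonneg (hM _ _ _) (ih (shiftSeq ω) _ _)

/-! ### L, u, f -/

noncomputable def Lfun (M : Fin b → Matrix (Fin d) (Fin d) ℝ) (c : Fin d → ℝ)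
    (ω : ℕ → Fin b) (n : ℕ) : ℝ :=
  vecEntrySumNorm (wordProd M ω n *ᵥ c)

noncomputable def ufun (M : Fin b → Matrix (Fin d) (Fin d) ℝ) (c : Fin d → ℝ)
    (ω : ℕ → Fin b) (n : ℕ) : Fin d → ℝ :=
  (Lfun M c ω n)⁻¹ • (wordProd M ω n *ᵥ c)

noncomputable def fd (M : Fin b → Matrix (Fin d) (Fin d) ℝ) (c : Fin d → ℝ)
    (m : ℕ) (τ : ℕ → Fin b) : ℝ :=
  vecEntrySumNorm (M (τ 0) *ᵥ ufun M c (shiftSeq τ) m)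

section withM
variable {M : Fin b → Matrix (Fin d) (Fin d) ℝ} {c : Fin d → ℝ}
variable (hne : ∀ (ω : ℕ → Fin b) (n : ℕ), wordProd M ω n *ᵥ c ≠ 0)
include hne

lemma Lfun_pos (ω : ℕ → Fin b) (n : ℕ) : 0 < Lfun M c ω n := vsn_pos (hne ω n)

lemma vsn_ufun (ω : ℕ → Fin b) (n : ℕ) : vecEntrySumNorm (ufun M c ω n) = 1 := by
  have hL := Lfun_pos hne ω n
  rw [ufun, vsn_smul, abs_of_pos (inv_pos.2 hL)]
  exact inv_mul_cancel₀ hL.ne'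

lemma Lfun_succ (ω : ℕ → Fin b) (n : ℕ) :
    Lfun M c ω (n + 1) = fd M c n ω * Lfun M c (shiftSeq ω) n := by
  have hL := Lfun_pos hne (shiftSeq ω) n
  have hv : wordProd M ω (n + 1) *ᵥ c
      = M (ω 0) *ᵥ (wordProd M (shiftSeq ω) n *ᵥ c) := by
    rw [wordProd_succ_left, Matrix.mulVec_mulVec]
  have hu : wordProd M (shiftSeq ω) n *ᵥ c
      = Lfun M c (shiftSeq ω) n • ufun M c (shiftSeq ω) n := by
    rw [ufun, smul_smul, mul_inv_cancel₀ hL.ne', one_smul]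
  rw [Lfun, hv, hu, Matrix.mulVec_smul, vsn_smul, abs_of_pos hL, fd]
  ring

lemma mulVec_eq_smul_ufun (ω : ℕ → Fin b) (n : ℕ) :
    wordProd M ω n *ᵥ c = Lfun M c ω n • ufun M c ω n := by
  rw [ufun, smul_smul, mul_inv_cancel₀ (Lfun_pos hne ω n).ne', one_smul]

lemma fd_pos (m : ℕ) (τ : ℕ → Fin b) : 0 < fd M c m τ := by
  have h := Lfun_succ hne τ m
  have h1 := Lfun_pos hne τ (m + 1)
  have h2 := Lfun_pos hne (shiftSeq τ) m
  nlinarith [vsn_nonneg (M (τ 0) *ᵥ ufun M c (shiftSeq τ) m)]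

lemma ufun_continuous (n : ℕ) : Continuous fun ω : ℕ → Fin b => ufun M c ω n := by
  have hv : Continuous fun ω : ℕ → Fin b => wordProd M ω n *ᵥ c :=
    (wordProd_continuous M n).matrix_mulVec continuous_const
  have hL : Continuous fun ω : ℕ → Fin b => Lfun M c ω n := vsn_continuous.comp hv
  exact (hL.inv₀ fun ω => (Lfun_pos hne ω n).ne').smul hv

lemma fd_continuous (m : ℕ) : Continuous (fd M c m) := by
  have hs : Continuous (shiftSeq : (ℕ → Fin b) → ℕ → Fin b) :=
    continuous_pi fun t => continuous_apply (t + 1)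
  have hA : Continuous fun τ : ℕ → Fin b => M (τ 0) :=
    (continuous_of_discreteTopology (α := Fin b) (f := M)).comp (continuous_apply 0)
  exact vsn_continuous.comp (hA.matrix_mulVec ((ufun_continuous hne m).comp hs))

lemma log_Lfun : ∀ (n : ℕ) (ω : ℕ → Fin b),
    Real.log (Lfun M c ω n)
      = (∑ k ∈ Finset.range n, Real.log (fd M c (n - 1 - k) (shiftSeq^[k] ω)))
        + Real.log (vecEntrySumNorm c) := by
  intro n
  induction n with
  | zero => intro ω; simp [Lfun, wordProd_zero, Matrix.one_mulVec]
  | succ n ih =>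
      intro ω
      rw [Lfun_succ hne, Real.log_mul (fd_pos hne n ω).ne' (Lfun_pos hne (shiftSeq ω) n).ne',
        ih (shiftSeq ω), Finset.sum_range_succ' (fun k => Real.log
          (fd M c (n + 1 - 1 - k) (shiftSeq^[k] ω))) n]
      have h0 : (fun k => Real.log (fd M c (n + 1 - 1 - k) (shiftSeq^[k] ω))) 0
          = Real.log (fd M c n ω) := by norm_num
      have h1 : ∀ k, Real.log (fd M c (n + 1 - 1 - (k + 1)) (shiftSeq^[k + 1] ω))
          = Real.log (fd M c (n - 1 - k) (shiftSeq^[k] (shiftSeq ω))) := by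
        intro k
        rw [Function.iterate_succ_apply]
        congr 2
        omega
      simp only [h0, h1]
      ring

end withM

/-! ### real helpers -/

lemma two_le_exp_add_exp_neg (t : ℝ) : 2 ≤ Real.exp t + Real.exp (-t) := by
  have h1 : Real.exp (t / 2) * Real.exp (-(t / 2)) = 1 := by
    rw [← Real.exp_add, add_neg_cancel, Real.exp_zero]
  have h2 : Real.exp (t / 2) * Real.exp (t / 2) = Real.exp t := by
    rw [← Real.exp_add]; norm_num
  have h3 : Real.exp (-(t / 2)) * Real.exp (-(t / 2)) = Real.exp (-t) := by
    rw [← Real.exp_add]; ring_nf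
  nlinarith [sq_nonneg (Real.exp (t / 2) - Real.exp (-(t / 2)))]

lemma abs_exp_sub_one_le (t : ℝ) : |Real.exp t - 1| ≤ Real.exp |t| - 1 := by
  rcases le_or_gt 0 t with h | h
  · rw [abs_of_nonneg h, abs_of_nonneg (by nlinarith [Real.add_one_le_exp t])]
  · rw [abs_of_neg h, abs_of_nonpos (by nlinarith [Real.exp_lt_one_iff.mpr h])]
    have := two_le_exp_add_exp_neg t
    linarith

lemma log_sub_log_le {δ a c' : ℝ} (hδ : 0 < δ) (ha : δ ≤ a) (hc : δ ≤ c') (h : a ≤ c') :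
    Real.log c' - Real.log a ≤ |a - c'| / δ := by
  have ha0 : 0 < a := hδ.trans_le ha
  have hc0 : 0 < c' := hδ.trans_le hc
  have : Real.log c' - Real.log a = Real.log (c' / a) := (Real.log_div hc0.ne' ha0.ne').symm
  rw [this]
  have h2 : Real.log (c' / a) ≤ c' / a - 1 := Real.log_le_sub_one_of_pos (div_pos hc0 ha0)
  have h3 : c' / a - 1 = (c' - a) / a := by field_simp
  have h4 : (c' - a) / a ≤ (c' - a) / δ := by gcongr
  have h5 : |a - c'| = c' - a := by rw [abs_sub_comm]; exact abs_of_nonneg (by linarith)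
  rw [h5]; linarith

lemma abs_log_sub_log_le {δ a c' : ℝ} (hδ : 0 < δ) (ha : δ ≤ a) (hc : δ ≤ c') :
    |Real.log a - Real.log c'| ≤ |a - c'| / δ := by
  rcases le_total a c' with h | h
  · rw [abs_of_nonpos (by
      have := Real.log_le_log (hδ.trans_le ha) h
      linarith)]
    have := log_sub_log_le hδ ha hc h
    linarith
  · rw [abs_of_nonneg (by
      have := Real.log_le_log (hδ.trans_le hc) h
      linarith)]
    have := log_sub_log_le hδ hc ha h
    rw [abs_sub_comm] at this
    linarith

lemma abs_log_le_of_between {a x C : ℝ} (ha : 0 < a) (h1 : a ≤ x) (h2 : x ≤ C) :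
    |Real.log x| ≤ |Real.log a| + |Real.log C| := by
  have hx : 0 < x := ha.trans_le h1
  rw [abs_le]
  constructor
  · have := Real.log_le_log ha h1
    have h3 : -|Real.log a| ≤ Real.log a := neg_abs_le _
    have h4 : (0:ℝ) ≤ |Real.log C| := abs_nonneg _
    linarith
  · have := Real.log_le_log hx h2
    have h3 : Real.log C ≤ |Real.log C| := le_abs_self _
    have h4 : (0:ℝ) ≤ |Real.log a| := abs_nonneg _
    linarith


lemma vsn_sub_comm (x y : Fin d → ℝ) :
    vecEntrySumNorm (x - y) = vecEntrySumNorm (y - x) := by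
  unfold vecEntrySumNorm
  refine Finset.sum_congr rfl fun i _ => ?_
  simpa using abs_sub_comm (x i) (y i)

set_option maxHeartbeats 1000000 in
/-- Theorem B.3: under the three conditions on the linear representation
`(r_i, M_i, c)`, the associated sofic measure has the weak-Gibbs property: there is a
continuous potential `Φ` with
`(ν([ω_1…ω_n]) / exp(Σ_{k<n} Φ(σ^k ω)))^{1/n} → 1` uniformly on `Ω_b`. -/
theorem sofic_measure_weak_gibbs (hb : 2 ≤ b)
    (M : Fin b → Matrix (Fin d) (Fin d) ℝ)
    (hMnonneg : ∀ (i : Fin b) (a a' : Fin d), 0 ≤ M i a a')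
    (r : Fin b → Fin d → ℝ)
    (hrnonneg : ∀ (i : Fin b) (j : Fin d), 0 ≤ r i j)
    (c : Fin d → ℝ) (hc : ∀ j, 0 < c j)
    (hne : ∀ (ω : ℕ → Fin b) (n : ℕ), wordProd M ω n *ᵥ c ≠ 0)
    (cω : (ℕ → Fin b) → Fin d → ℝ)
    -- (1) uniform convergence of `c_{ω,n}` to `c_ω`
    (h1 : ∀ ε > (0 : ℝ), ∃ N₀ : ℕ, ∀ n ≥ N₀, ∀ ω : ℕ → Fin b,
      vecEntrySumNorm
        ((vecEntrySumNorm (wordProd M ω n *ᵥ c))⁻¹ • (wordProd M ω n *ᵥ c) - cω ω) < ε)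
    -- (2) `r_i · c_{ω,n} > 0` and `(r_i · c_{ω,n})^{1/n} → 1` uniformly
    (h2pos : ∀ (i : Fin b) (ω : ℕ → Fin b) (n : ℕ),
      0 < r i ⬝ᵥ ((vecEntrySumNorm (wordProd M ω n *ᵥ c))⁻¹ • (wordProd M ω n *ᵥ c)))
    (h2 : ∀ ε > (0 : ℝ), ∃ N₀ : ℕ, ∀ n ≥ N₀, ∀ (ω : ℕ → Fin b) (i : Fin b),
      |(r i ⬝ᵥ ((vecEntrySumNorm (wordProd M ω n *ᵥ c))⁻¹ • (wordProd M ω n *ᵥ c)))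
        ^ ((1 : ℝ) / (n : ℝ)) - 1| < ε)
    -- (3) `M_i c_ω ≠ 0`
    (h3 : ∀ (ω : ℕ → Fin b) (i : Fin b), M i *ᵥ cω ω ≠ 0) :
    ∃ Φ : (ℕ → Fin b) → ℝ, Continuous Φ ∧
      ∀ ε > (0 : ℝ), ∃ N₀ : ℕ, ∀ n ≥ N₀, ∀ ω : ℕ → Fin b,
        |((r (ω 0) ⬝ᵥ (wordProd M (shiftSeq ω) (n - 1) *ᵥ c)) /
            Real.exp (∑ t ∈ Finset.range n, Φ (shiftSeq^[t] ω)))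
          ^ ((1 : ℝ) / (n : ℝ)) - 1| < ε := by
  classical
  haveI : Nonempty (Fin b) := ⟨⟨0, by omega⟩⟩
  haveI : Nonempty (ℕ → Fin b) := ⟨fun _ => Classical.arbitrary _⟩
  -- restate hypotheses in terms of `ufun`
  have h1' : ∀ ε > (0 : ℝ), ∃ N₀ : ℕ, ∀ n ≥ N₀, ∀ ω : ℕ → Fin b,
      vecEntrySumNorm (ufun M c ω n - cω ω) < ε := by
    simpa only [ufun, Lfun] using h1
  have h2pos' : ∀ (i : Fin b) (ω : ℕ → Fin b) (n : ℕ), 0 < r i ⬝ᵥ ufun M c ω n := by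
    simpa only [ufun, Lfun] using h2pos
  have h2' : ∀ ε > (0 : ℝ), ∃ N₀ : ℕ, ∀ n ≥ N₀, ∀ (ω : ℕ → Fin b) (i : Fin b),
      |(r i ⬝ᵥ ufun M c ω n) ^ ((1 : ℝ) / (n : ℝ)) - 1| < ε := by
    simpa only [ufun, Lfun] using h2
  -- continuity of cω
  have htu : TendstoUniformly (fun n ω => ufun M c ω n) cω atTop := by
    rw [Metric.tendstoUniformly_iff]
    intro ε hε
    obtain ⟨N, hN⟩ := h1' (ε / 2) (half_pos hε)
    filter_upwards [eventually_ge_atTop N] with n hn ω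
    have h5 := hN n hn ω
    have h6 : dist (cω ω) (ufun M c ω n) ≤ vecEntrySumNorm (ufun M c ω n - cω ω) := by
      rw [dist_eq_norm, pi_norm_le_iff_of_nonneg (vsn_nonneg _)]
      intro i
      have h7 : ‖(cω ω - ufun M c ω n) i‖ = |(ufun M c ω n - cω ω) i| := by
        simp [Real.norm_eq_abs, abs_sub_comm]
      rw [h7]
      exact abs_le_vsn _ i
    linarith
  have hcωc : Continuous cω :=
    htu.continuous (Eventually.of_forall fun n => ufun_continuous hne n).frequently
  -- the function F and potential Φ
  set F : (ℕ → Fin b) → ℝ := fun τ => vecEntrySumNorm (M (τ 0) *ᵥ cω (shiftSeq τ)) with hFdef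
  have hFpos : ∀ τ, 0 < F τ := fun τ => vsn_pos (h3 (shiftSeq τ) (τ 0))
  have hshiftc : Continuous (shiftSeq : (ℕ → Fin b) → ℕ → Fin b) :=
    continuous_pi fun t => continuous_apply (t + 1)
  have hFc : Continuous F := by
    have hA : Continuous fun τ : ℕ → Fin b => M (τ 0) :=
      (continuous_of_discreteTopology (α := Fin b) (f := M)).comp (continuous_apply 0)
    exact vsn_continuous.comp (hA.matrix_mulVec (hcωc.comp hshiftc))
  set Φ : (ℕ → Fin b) → ℝ := fun τ => Real.log (F τ) with hΦdef
  have hΦc : Continuous Φ := by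
    rw [continuous_iff_continuousAt]
    intro τ
    exact (Real.continuousAt_log (hFpos τ).ne').comp hFc.continuousAt
  refine ⟨Φ, hΦc, ?_⟩
  -- the constant K
  set K : ℝ := (∑ i, ∑ a, ∑ a', |M i a a'|) + 1 with hKdef
  have hK1 : (1 : ℝ) ≤ K := by
    have : (0:ℝ) ≤ ∑ i, ∑ a, ∑ a', |M i a a'| :=
      Finset.sum_nonneg fun i _ => Finset.sum_nonneg fun a _ =>
        Finset.sum_nonneg fun a' _ => abs_nonneg _
    linarith
  have hK0 : (0 : ℝ) < K := lt_of_lt_of_le one_pos hK1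
  have hKb : ∀ (i : Fin b) (x : Fin d → ℝ),
      vecEntrySumNorm (M i *ᵥ x) ≤ K * vecEntrySumNorm x := by
    intro i x
    refine (vsn_mulVec_le (M i) x).trans ?_
    have hle : (∑ a, ∑ a', |M i a a'|) ≤ K := by
      rw [hKdef]
      have h5 := Finset.single_le_sum
        (f := fun i : Fin b => ∑ a, ∑ a', |M i a a'|)
        (fun j _ => Finset.sum_nonneg fun a _ => Finset.sum_nonneg fun a' _ => abs_nonneg _)
        (Finset.mem_univ i)
      linarith
    exact mul_le_mul_of_nonneg_right hle (vsn_nonneg x)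
  -- bounds on fd and F
  have hfd_le : ∀ (m : ℕ) (τ : ℕ → Fin b), fd M c m τ ≤ K := by
    intro m τ
    have h5 := hKb (τ 0) (ufun M c (shiftSeq τ) m)
    rw [vsn_ufun hne] at h5
    simpa [fd] using h5
  have hcωb : ∀ τ, vecEntrySumNorm (cω τ) ≤ 2 := by
    intro τ
    obtain ⟨N, hN⟩ := h1' 1 one_pos
    have h5 := hN N le_rfl τ
    have h6 := vsn_sub_abs (cω τ) (ufun M c τ N)
    rw [vsn_sub_comm] at h6
    have h7 := vsn_ufun hne (ω := τ) (n := N)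
    have h8 := abs_le.1 h6
    linarith [h8.2]
  have hF_le : ∀ τ, F τ ≤ 2 * K := by
    intro τ
    have h4 := hKb (τ 0) (cω (shiftSeq τ))
    have h5 := hcωb (shiftSeq τ)
    calc F τ ≤ K * vecEntrySumNorm (cω (shiftSeq τ)) := h4
      _ ≤ K * 2 := mul_le_mul_of_nonneg_left h5 hK0.le
      _ = 2 * K := by ring
  -- |fd - F| bound
  have hdiff : ∀ (m : ℕ) (τ : ℕ → Fin b),
      |fd M c m τ - F τ| ≤ K * vecEntrySumNorm (ufun M c (shiftSeq τ) m - cω (shiftSeq τ)) := by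
    intro m τ
    have h5 := vsn_sub_abs (M (τ 0) *ᵥ ufun M c (shiftSeq τ) m) (M (τ 0) *ᵥ cω (shiftSeq τ))
    rw [← Matrix.mulVec_sub] at h5
    exact h5.trans (hKb (τ 0) _)
  -- minimum of F
  obtain ⟨τ₀, -, hτ₀⟩ := isCompact_univ.exists_isMinOn Set.univ_nonempty hFc.continuousOn
  set δ₀ : ℝ := F τ₀ with hδ₀def
  have hδ₀pos : 0 < δ₀ := hFpos τ₀
  have hδ₀le : ∀ τ, δ₀ ≤ F τ := fun τ => isMinOn_iff.1 hτ₀ τ (Set.mem_univ τ)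
  -- uniform minima of fd for finitely many m
  have hmin : ∀ m : ℕ, ∃ δ > (0:ℝ), ∀ τ, δ ≤ fd M c m τ := by
    intro m
    obtain ⟨τ₁, -, hτ₁⟩ := isCompact_univ.exists_isMinOn Set.univ_nonempty
      (fd_continuous hne m).continuousOn
    exact ⟨fd M c m τ₁, fd_pos hne m τ₁, fun τ => isMinOn_iff.1 hτ₁ τ (Set.mem_univ τ)⟩
  have hminN : ∀ N : ℕ, ∃ δ > (0:ℝ), ∀ m < N, ∀ τ, δ ≤ fd M c m τ := by
    intro N
    induction N with
    | zero => exact ⟨1, one_pos, fun m hm => absurd hm (Nat.not_lt_zero m)⟩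
    | succ N ih =>
        obtain ⟨δ, hδ, hh⟩ := ih
        obtain ⟨δ', hδ', hh'⟩ := hmin N
        refine ⟨min δ δ', lt_min hδ hδ', fun m hm τ => ?_⟩
        rcases Nat.lt_succ_iff_lt_or_eq.1 hm with h | h
        · exact (min_le_left _ _).trans (hh m h τ)
        · subst h; exact (min_le_right _ _).trans (hh' τ)
  -- uniform smallness of |log fd - Φ|
  have hΔ : ∀ η > (0:ℝ), ∃ N₁ : ℕ, ∀ m, N₁ ≤ m → ∀ τ,
      |Real.log (fd M c m τ) - Φ τ| ≤ η := by
    intro η hη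
    have hε' : (0:ℝ) < δ₀ * min 1 η / (2 * K) :=
      div_pos (mul_pos hδ₀pos (lt_min one_pos hη)) (by linarith)
    obtain ⟨N₁, hN₁⟩ := h1' _ hε'
    refine ⟨N₁, fun m hm τ => ?_⟩
    have hu := hN₁ m hm (shiftSeq τ)
    have h5 : |fd M c m τ - F τ| ≤ δ₀ * min 1 η / 2 := by
      refine (hdiff m τ).trans ?_
      have h6 : K * vecEntrySumNorm (ufun M c (shiftSeq τ) m - cω (shiftSeq τ))
          ≤ K * (δ₀ * min 1 η / (2 * K)) := mul_le_mul_of_nonneg_left hu.le hK0.le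
      have h7 : K * (δ₀ * min 1 η / (2 * K)) = δ₀ * min 1 η / 2 := by
        field_simp [hK0.ne']
        try ring
      linarith
    have hmin1 : min 1 η ≤ 1 := min_le_left _ _
    have h8 : |fd M c m τ - F τ| ≤ δ₀ / 2 := by nlinarith
    have hfdlb : δ₀ / 2 ≤ fd M c m τ := by
      have h81 := (abs_le.1 h8).1
      have h82 := hδ₀le τ
      linarith
    have hFlb : δ₀ / 2 ≤ F τ := by linarith [hδ₀le τ]
    have h9 := abs_log_sub_log_le (half_pos hδ₀pos) hfdlb hFlb
    have h10 : |fd M c m τ - F τ| / (δ₀ / 2) ≤ (δ₀ * min 1 η / 2) / (δ₀ / 2) := by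
      gcongr
    have h11 : (δ₀ * min 1 η / 2) / (δ₀ / 2) = min 1 η := by
      field_simp [hδ₀pos.ne']
      try ring
    have h12 : min 1 η ≤ η := min_le_right _ _
    calc |Real.log (fd M c m τ) - Φ τ| ≤ |fd M c m τ - F τ| / (δ₀ / 2) := h9
      _ ≤ (δ₀ * min 1 η / 2) / (δ₀ / 2) := h10
      _ = min 1 η := h11
      _ ≤ η := h12
  -- bound on |Φ|
  set AΦ : ℝ := |Real.log δ₀| + |Real.log (2 * K)| with hAΦdef
  have hΦb : ∀ τ, |Φ τ| ≤ AΦ := fun τ =>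
    abs_log_le_of_between hδ₀pos (hδ₀le τ) (hF_le τ)
  have hAΦ0 : 0 ≤ AΦ := by positivity
  -- log bound for r ⬝ᵥ u
  have hrlog : ∀ δ > (0:ℝ), ∃ N₂ : ℕ, ∀ m, N₂ ≤ m → 1 ≤ m → ∀ (ω : ℕ → Fin b) (i : Fin b),
      |Real.log (r i ⬝ᵥ ufun M c ω m)| ≤ (m:ℝ) * δ := by
    intro δ hδ
    have hε2 : (0:ℝ) < 1 - Real.exp (-δ) := by
      have : Real.exp (-δ) < 1 := Real.exp_lt_one_iff.mpr (by linarith)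
      linarith
    obtain ⟨N₂, hN₂⟩ := h2' _ hε2
    refine ⟨N₂, fun m hm hm1 ω i => ?_⟩
    have hy : 0 < r i ⬝ᵥ ufun M c ω m := h2pos' i ω m
    have h5 := hN₂ m hm ω i
    have h6 := abs_lt.1 h5
    have hm0 : (0:ℝ) < (m:ℝ) := by exact_mod_cast hm1
    have hylb : Real.exp (-δ) < (r i ⬝ᵥ ufun M c ω m) ^ ((1:ℝ)/(m:ℝ)) := by linarith [h6.1]
    have hyub : (r i ⬝ᵥ ufun M c ω m) ^ ((1:ℝ)/(m:ℝ)) < Real.exp δ := by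
      have := two_le_exp_add_exp_neg δ
      linarith [h6.2]
    have hl1 : -δ < ((1:ℝ)/(m:ℝ)) * Real.log (r i ⬝ᵥ ufun M c ω m) := by
      have := Real.log_lt_log (Real.exp_pos (-δ)) hylb
      rwa [Real.log_exp, Real.log_rpow hy] at this
    have hl2 : ((1:ℝ)/(m:ℝ)) * Real.log (r i ⬝ᵥ ufun M c ω m) < δ := by
      have := Real.log_lt_log (Real.rpow_pos_of_pos hy _) hyub
      rwa [Real.log_exp, Real.log_rpow hy] at this
    have h9 := mul_lt_mul_of_pos_right hl2 hm0
    have h10 := mul_lt_mul_of_pos_right hl1 hm0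
    have hid : (1:ℝ)/(m:ℝ) * Real.log (r i ⬝ᵥ ufun M c ω m) * (m:ℝ)
        = Real.log (r i ⬝ᵥ ufun M c ω m) := by
      field_simp
    rw [hid] at h9 h10
    rw [abs_le]
    constructor
    · nlinarith
    · nlinarith
  -- main estimate
  intro ε hε
  set ε₁ : ℝ := Real.log (1 + ε) with hε₁def
  have hε₁ : 0 < ε₁ := Real.log_pos (by linarith)
  obtain ⟨N₁, hN₁⟩ := hΔ (ε₁ / 4) (by linarith)
  obtain ⟨δN, hδNpos, hδNb⟩ := hminN N₁
  set B : ℝ := (|Real.log δN| + |Real.log K|) + AΦ with hBdef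
  have hB0 : 0 ≤ B := by positivity
  have hB : ∀ m, m < N₁ → ∀ τ, |Real.log (fd M c m τ) - Φ τ| ≤ B := by
    intro m hm τ
    have h5 : |Real.log (fd M c m τ)| ≤ |Real.log δN| + |Real.log K| :=
      abs_log_le_of_between hδNpos (hδNb m hm τ) (hfd_le m τ)
    have h6 := hΦb τ
    calc |Real.log (fd M c m τ) - Φ τ| ≤ |Real.log (fd M c m τ)| + |Φ τ| := by
          rw [sub_eq_add_neg]
          exact (abs_add_le _ _).trans (by rw [abs_neg])
      _ ≤ B := by rw [hBdef]; linarith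
  obtain ⟨N₂, hN₂⟩ := hrlog (ε₁ / 4) (by linarith)
  obtain ⟨N₃, hN₃⟩ := exists_nat_gt
    ((|Real.log (vecEntrySumNorm c)| + AΦ + (N₁:ℝ) * B) / (ε₁ / 4))
  refine ⟨max (max (N₂ + 1) 2) (N₃ + 1), fun n hn ω => ?_⟩
  have hn2 : 2 ≤ n := le_trans (le_max_of_le_left (le_max_right _ _)) hn
  have hnN2 : N₂ + 1 ≤ n := le_trans (le_max_of_le_left (le_max_left _ _)) hn
  have hnN3 : N₃ + 1 ≤ n := le_trans (le_max_right _ _) hn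
  set m' : ℕ := n - 1 with hm'def
  have hnm' : n = m' + 1 := by omega
  have hm'1 : 1 ≤ m' := by omega
  have hm'N2 : N₂ ≤ m' := by omega
  have hn0 : (0:ℝ) < (n:ℝ) := by exact_mod_cast (by omega : 0 < n)
  -- the quantity X and its positivity
  set u' : Fin d → ℝ := ufun M c (shiftSeq ω) m' with hu'def
  set L' : ℝ := Lfun M c (shiftSeq ω) m' with hL'def
  have hL'pos : 0 < L' := Lfun_pos hne (shiftSeq ω) m'
  have hrupos : 0 < r (ω 0) ⬝ᵥ u' := h2pos' (ω 0) (shiftSeq ω) m'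
  have hXeq : r (ω 0) ⬝ᵥ (wordProd M (shiftSeq ω) (n-1) *ᵥ c) = L' * (r (ω 0) ⬝ᵥ u') := by
    rw [← hm'def, mulVec_eq_smul_ufun hne, ← hu'def, ← hL'def, dotProduct_smul,
      smul_eq_mul]
  set X : ℝ := r (ω 0) ⬝ᵥ (wordProd M (shiftSeq ω) (n-1) *ᵥ c) with hXdef
  have hX : 0 < X := by rw [hXeq]; exact mul_pos hL'pos hrupos
  set S : ℝ := ∑ t ∈ Finset.range n, Φ (shiftSeq^[t] ω) with hSdef
  -- decompose T := log X - S
  have hT : Real.log X - S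
      = Real.log (r (ω 0) ⬝ᵥ u') + Real.log (vecEntrySumNorm c) - Φ ω
        + ∑ k ∈ Finset.range m',
            (Real.log (fd M c (m' - 1 - k) (shiftSeq^[k] (shiftSeq ω)))
              - Φ (shiftSeq^[k] (shiftSeq ω))) := by
    have hlogX : Real.log X = Real.log L' + Real.log (r (ω 0) ⬝ᵥ u') := by
      rw [hXeq, Real.log_mul hL'pos.ne' hrupos.ne']
    have hlogL : Real.log L'
        = (∑ k ∈ Finset.range m', Real.log (fd M c (m' - 1 - k) (shiftSeq^[k] (shiftSeq ω))))
          + Real.log (vecEntrySumNorm c) := by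
      rw [hL'def]; exact log_Lfun hne m' (shiftSeq ω)
    have hS2 : S = (∑ k ∈ Finset.range m', Φ (shiftSeq^[k] (shiftSeq ω))) + Φ ω := by
      rw [hSdef, hnm', Finset.sum_range_succ' (fun t => Φ (shiftSeq^[t] ω)) m']
      simp only [Function.iterate_succ_apply, Function.iterate_zero_apply]
    rw [hlogX, hlogL, hS2, Finset.sum_sub_distrib]
    ring
  -- bound the sum
  have hsum : ∑ k ∈ Finset.range m',
      |Real.log (fd M c (m' - 1 - k) (shiftSeq^[k] (shiftSeq ω)))
        - Φ (shiftSeq^[k] (shiftSeq ω))|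
      ≤ (m':ℝ) * (ε₁ / 4) + (N₁:ℝ) * B := by
    have hterm : ∀ k ∈ Finset.range m',
        |Real.log (fd M c (m' - 1 - k) (shiftSeq^[k] (shiftSeq ω)))
          - Φ (shiftSeq^[k] (shiftSeq ω))|
        ≤ ε₁ / 4 + (if k + 1 + N₁ ≤ m' then 0 else B) := by
      intro k hk
      rw [Finset.mem_range] at hk
      by_cases hcase : k + 1 + N₁ ≤ m'
      · rw [if_pos hcase]
        have h5 : N₁ ≤ m' - 1 - k := by omega
        linarith [hN₁ (m' - 1 - k) h5 (shiftSeq^[k] (shiftSeq ω))]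
      · rw [if_neg hcase]
        have h5 : m' - 1 - k < N₁ := by omega
        linarith [hB (m' - 1 - k) h5 (shiftSeq^[k] (shiftSeq ω))]
    calc ∑ k ∈ Finset.range m', |Real.log (fd M c (m' - 1 - k) (shiftSeq^[k] (shiftSeq ω)))
          - Φ (shiftSeq^[k] (shiftSeq ω))|
        ≤ ∑ k ∈ Finset.range m', (ε₁ / 4 + (if k + 1 + N₁ ≤ m' then 0 else B)) :=
          Finset.sum_le_sum hterm
      _ = (m':ℝ) * (ε₁ / 4)
          + ∑ k ∈ Finset.range m', (if k + 1 + N₁ ≤ m' then (0:ℝ) else B) := by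
          rw [Finset.sum_add_distrib, Finset.sum_const, Finset.card_range, nsmul_eq_mul]
      _ ≤ (m':ℝ) * (ε₁ / 4) + (N₁:ℝ) * B := by
          have he : ∑ k ∈ Finset.range m', (if k + 1 + N₁ ≤ m' then (0:ℝ) else B)
              = ∑ k ∈ (Finset.range m').filter (fun k => ¬(k + 1 + N₁ ≤ m')), B := by
            rw [Finset.sum_filter]
            refine Finset.sum_congr rfl fun k _ => ?_
            by_cases h : k + 1 + N₁ ≤ m' <;> simp [h]
          have hsub : (Finset.range m').filter (fun k => ¬(k + 1 + N₁ ≤ m'))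
              ⊆ Finset.Ico (m' - N₁) m' := by
            intro k hk
            rw [Finset.mem_filter, Finset.mem_range] at hk
            rw [Finset.mem_Ico]
            omega
          have hcard : ((Finset.range m').filter (fun k => ¬(k + 1 + N₁ ≤ m'))).card ≤ N₁ := by
            have h5 := Finset.card_le_card hsub
            rw [Nat.card_Ico] at h5
            omega
          have h6 : ∑ k ∈ Finset.range m', (if k + 1 + N₁ ≤ m' then (0:ℝ) else B)
              ≤ (N₁:ℝ) * B := by
            rw [he, Finset.sum_const, nsmul_eq_mul]
            exact mul_le_mul_of_nonneg_right (by exact_mod_cast hcard) hB0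
          exact add_le_add_right h6 _
  -- total bound on |T|
  have hru : |Real.log (r (ω 0) ⬝ᵥ u')| ≤ (m':ℝ) * (ε₁ / 4) := by
    rw [hu'def]
    exact hN₂ m' hm'N2 hm'1 (shiftSeq ω) (ω 0)
  have hstuff : |Real.log (vecEntrySumNorm c)| + AΦ + (N₁:ℝ) * B < (n:ℝ) * (ε₁ / 4) := by
    have h5 : (|Real.log (vecEntrySumNorm c)| + AΦ + (N₁:ℝ) * B) / (ε₁ / 4) < (N₃:ℝ) := hN₃
    have h6 : (N₃:ℝ) < (n:ℝ) := by exact_mod_cast (by omega : N₃ < n)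
    have h7 : (0:ℝ) < ε₁ / 4 := by linarith
    rw [div_lt_iff₀ h7] at h5
    nlinarith
  have hm'n : (m':ℝ) ≤ (n:ℝ) := by exact_mod_cast (by omega : m' ≤ n)
  have hTbound : |Real.log X - S| < (n:ℝ) * ε₁ := by
    rw [hT]
    have htr : |Real.log (r (ω 0) ⬝ᵥ u') + Real.log (vecEntrySumNorm c) - Φ ω
        + ∑ k ∈ Finset.range m',
            (Real.log (fd M c (m' - 1 - k) (shiftSeq^[k] (shiftSeq ω)))
              - Φ (shiftSeq^[k] (shiftSeq ω)))|
        ≤ |Real.log (r (ω 0) ⬝ᵥ u')| + |Real.log (vecEntrySumNorm c)| + |Φ ω|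
          + ∑ k ∈ Finset.range m',
              |Real.log (fd M c (m' - 1 - k) (shiftSeq^[k] (shiftSeq ω)))
                - Φ (shiftSeq^[k] (shiftSeq ω))| := by
      have t1 := Finset.abs_sum_le_sum_abs
        (fun k => Real.log (fd M c (m' - 1 - k) (shiftSeq^[k] (shiftSeq ω)))
          - Φ (shiftSeq^[k] (shiftSeq ω))) (Finset.range m')
      have t2 := abs_add_le (Real.log (r (ω 0) ⬝ᵥ u') + Real.log (vecEntrySumNorm c) - Φ ω)
        (∑ k ∈ Finset.range m',
          (Real.log (fd M c (m' - 1 - k) (shiftSeq^[k] (shiftSeq ω)))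
            - Φ (shiftSeq^[k] (shiftSeq ω))))
      have t3 : |Real.log (r (ω 0) ⬝ᵥ u') + Real.log (vecEntrySumNorm c) - Φ ω|
          ≤ |Real.log (r (ω 0) ⬝ᵥ u')| + |Real.log (vecEntrySumNorm c)| + |Φ ω| := by
        have t4 := abs_add_le (Real.log (r (ω 0) ⬝ᵥ u')) (Real.log (vecEntrySumNorm c))
        have t5 := abs_add_le (Real.log (r (ω 0) ⬝ᵥ u') + Real.log (vecEntrySumNorm c)) (-(Φ ω))
        rw [abs_neg] at t5
        rw [sub_eq_add_neg]
        linarith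
      linarith
    have hΦω := hΦb ω
    calc |Real.log (r (ω 0) ⬝ᵥ u') + Real.log (vecEntrySumNorm c) - Φ ω
        + ∑ k ∈ Finset.range m',
            (Real.log (fd M c (m' - 1 - k) (shiftSeq^[k] (shiftSeq ω)))
              - Φ (shiftSeq^[k] (shiftSeq ω)))|
        ≤ |Real.log (r (ω 0) ⬝ᵥ u')| + |Real.log (vecEntrySumNorm c)| + |Φ ω|
          + ∑ k ∈ Finset.range m',
              |Real.log (fd M c (m' - 1 - k) (shiftSeq^[k] (shiftSeq ω)))
                - Φ (shiftSeq^[k] (shiftSeq ω))| := htr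
      _ ≤ (m':ℝ) * (ε₁ / 4) + |Real.log (vecEntrySumNorm c)| + AΦ
          + ((m':ℝ) * (ε₁ / 4) + (N₁:ℝ) * B) := by linarith [hsum, hru]
      _ < (n:ℝ) * (ε₁ / 4) + (n:ℝ) * (ε₁ / 4) + (n:ℝ) * (ε₁ / 4) := by nlinarith
      _ ≤ (n:ℝ) * ε₁ := by nlinarith
  -- conclude
  have hXS : (0:ℝ) < X / Real.exp S := div_pos hX (Real.exp_pos S)
  rw [Real.rpow_def_of_pos hXS]
  have hlogXS : Real.log (X / Real.exp S) = Real.log X - S := by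
    rw [Real.log_div hX.ne' (Real.exp_ne_zero S), Real.log_exp]
  rw [hlogXS]
  have habs : |(Real.log X - S) * ((1:ℝ) / (n:ℝ))| < ε₁ := by
    rw [abs_mul, abs_of_pos (by positivity : (0:ℝ) < (1:ℝ)/(n:ℝ))]
    have h7 : |Real.log X - S| * ((1:ℝ)/(n:ℝ)) < ((n:ℝ) * ε₁) * ((1:ℝ)/(n:ℝ)) := by
      apply mul_lt_mul_of_pos_right hTbound
      positivity
    have h8 : ((n:ℝ) * ε₁) * ((1:ℝ)/(n:ℝ)) = ε₁ := by
      field_simp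
    linarith
  calc |Real.exp ((Real.log X - S) * ((1:ℝ)/(n:ℝ))) - 1|
      ≤ Real.exp |(Real.log X - S) * ((1:ℝ)/(n:ℝ))| - 1 := abs_exp_sub_one_le _
    _ < Real.exp ε₁ - 1 := by
        have := Real.exp_lt_exp.2 habs
        linarith
    _ = ε := by rw [hε₁def, Real.exp_log (by linarith : (0:ℝ) < 1 + ε)]; ring

end
end
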